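/- arXiv:math/0608553 — 2 statements merged into one kernel-verified Lean document; each statement's English description precedes it below -/
import Mathlib

section
/- Let r ∈ (0,1), let m ∈ ℕ, and let K be a partition polynomial such that (1−r)^m = 2·K(2r(1−r)). Then β = (1−r)/r is integral over ℤ (i.e., β is an algebraic integer). -/
open MeasureTheory Polynomial

/-- `P` is a partition polynomial: `P(X) = ∑_{i=0}^n a_i X^i (1-X)^(n-i)` with
integers `0 ≤ a_i ≤ C(n,i)`. -/
def IsPartitionPolynomial (P : Polynomial ℤ) : Prop :=
  ∃ (n : ℕ) (a : ℕ → ℤ),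
    (∀ i ≤ n, 0 ≤ a i ∧ a i ≤ (n.choose i : ℤ)) ∧
    P = ∑ i ∈ Finset.range (n + 1), C (a i) * X ^ i * (1 - X) ^ (n - i)

/-- if `r ∈ (0,1)`, `m ∈ ℕ` and `K` is a partition polynomial with
`(1-r)^m = 2 K(2r(1-r))`, then `β = (1-r)/r` is an algebraic integer. -/
theorem beta_integral_of_equation (r : ℝ) (hr : r ∈ Set.Ioo (0 : ℝ) 1)
    (m : ℕ) (K : Polynomial ℤ) (hK : IsPartitionPolynomial K)
    (heq : (1 - r) ^ m = 2 * aeval (2 * r * (1 - r)) K) :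
    IsIntegral ℤ ((1 - r) / r) := by
  obtain ⟨n, a, ha, hKdef⟩ := hK
  obtain ⟨hr0, hr1⟩ := hr
  have hrne : r ≠ 0 := ne_of_gt hr0
  set b : ℝ := (1 - r) / r with hbdef
  -- basic algebraic identities
  have e0 : r * b = 1 - r := by rw [hbdef]; field_simp
  have e1 : r * (1 + b) = 1 := by rw [hbdef]; field_simp; ring
  have e2 : r ^ 2 * (1 + b ^ 2) = 1 - 2 * r * (1 - r) := by rw [hbdef]; field_simp; ring
  -- the polynomials
  set Q : ℤ[X] := ∑ i ∈ Finset.range (n + 1), C (a i * 2 ^ i) * X ^ i * (1 + X ^ 2) ^ (n - i) with hQdef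
  set R : ℤ[X] := X ^ m * (1 + X) ^ (2 * n) - 2 * (1 + X) ^ m * Q with hRdef
  set ε : ℤ := 1 - 2 * a 0 with hεdef
  -- monicity facts
  have h1X : (1 + X : ℤ[X]).Monic := by
    simpa [add_comm] using monic_X_add_C (1 : ℤ)
  have h1X2 : (1 + X ^ 2 : ℤ[X]).Monic := by
    simpa [add_comm] using monic_X_pow_add_C (1 : ℤ) (two_ne_zero)
  have h1Xdeg : (1 + X : ℤ[X]).natDegree = 1 := by
    simpa [add_comm] using natDegree_X_add_C (1 : ℤ)
  have h1X2deg : (1 + X ^ 2 : ℤ[X]).natDegree = 2 := by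
    simpa [add_comm] using natDegree_X_pow_add_C (n := 2) (r := (1 : ℤ))
  have hQdeg : Q.natDegree ≤ 2 * n := by
    refine natDegree_sum_le_of_forall_le _ _ ?_
    intro i hi
    have hin : i ≤ n := Nat.lt_succ_iff.mp (Finset.mem_range.mp hi)
    calc (C (a i * 2 ^ i) * X ^ i * (1 + X ^ 2) ^ (n - i)).natDegree
        ≤ (C (a i * 2 ^ i) * X ^ i).natDegree + ((1 + X ^ 2 : ℤ[X]) ^ (n - i)).natDegree :=
          natDegree_mul_le
      _ ≤ i + 2 * (n - i) := by
          gcongr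
          · calc (C (a i * 2 ^ i) * X ^ i).natDegree ≤ (X ^ i : ℤ[X]).natDegree :=
                natDegree_C_mul_le _ _
            _ = i := natDegree_X_pow i
          · calc ((1 + X ^ 2 : ℤ[X]) ^ (n - i)).natDegree
                ≤ (n - i) * (1 + X ^ 2 : ℤ[X]).natDegree := natDegree_pow_le
              _ = 2 * (n - i) := by rw [h1X2deg]; ring
      _ ≤ 2 * n := by omega
  have hQcoeff : Q.coeff (2 * n) = a 0 := by
    rw [hQdef, finset_sum_coeff]
    rw [Finset.sum_eq_single_of_mem 0 (Finset.mem_range.mpr (Nat.succ_pos n))]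
    · have h2n : ((1 + X ^ 2 : ℤ[X]) ^ n).natDegree = 2 * n := by
        rw [h1X2.natDegree_pow, h1X2deg]; ring
      have : ((1 + X ^ 2 : ℤ[X]) ^ n).coeff (2 * n) = 1 := by
        have := (h1X2.pow n).coeff_natDegree
        rwa [h2n] at this
      simp [this]
    · intro i hi hi0
      have hin : i ≤ n := Nat.lt_succ_iff.mp (Finset.mem_range.mp hi)
      apply coeff_eq_zero_of_natDegree_lt
      calc (C (a i * 2 ^ i) * X ^ i * (1 + X ^ 2) ^ (n - i)).natDegree
          ≤ (C (a i * 2 ^ i) * X ^ i).natDegree + ((1 + X ^ 2 : ℤ[X]) ^ (n - i)).natDegree :=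
            natDegree_mul_le
        _ ≤ i + 2 * (n - i) := by
            gcongr
            · calc (C (a i * 2 ^ i) * X ^ i).natDegree ≤ (X ^ i : ℤ[X]).natDegree :=
                  natDegree_C_mul_le _ _
              _ = i := natDegree_X_pow i
            · calc ((1 + X ^ 2 : ℤ[X]) ^ (n - i)).natDegree
                  ≤ (n - i) * (1 + X ^ 2 : ℤ[X]).natDegree := natDegree_pow_le
                _ = 2 * (n - i) := by rw [h1X2deg]; ring
        _ < 2 * n := by omega
  have hM1 : (X ^ m * (1 + X) ^ (2 * n) : ℤ[X]).Monic := (monic_X_pow m).mul (h1X.pow _)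
  have hM1deg : (X ^ m * (1 + X) ^ (2 * n) : ℤ[X]).natDegree = m + 2 * n := by
    rw [(monic_X_pow m).natDegree_mul (h1X.pow _), natDegree_X_pow, h1X.natDegree_pow, h1Xdeg,
      mul_one]
  have hRcoeff : R.coeff (m + 2 * n) = 1 - 2 * a 0 := by
    rw [hRdef, coeff_sub]
    have c1 : (X ^ m * (1 + X) ^ (2 * n) : ℤ[X]).coeff (m + 2 * n) = 1 := by
      have := hM1.coeff_natDegree
      rwa [hM1deg] at this
    have hpm : ((1 + X : ℤ[X]) ^ m).natDegree ≤ m := by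
      rw [h1X.natDegree_pow, h1Xdeg, mul_one]
    have cpm : ((1 + X : ℤ[X]) ^ m).coeff m = 1 := by
      have := (h1X.pow m).coeff_natDegree
      rwa [h1X.natDegree_pow, h1Xdeg, mul_one] at this
    have c2 : (2 * (1 + X) ^ m * Q : ℤ[X]).coeff (m + 2 * n) = 2 * a 0 := by
      have : (2 * (1 + X) ^ m * Q : ℤ[X]) = C 2 * ((1 + X) ^ m * Q) := by
        rw [map_ofNat]; ring
      rw [this, coeff_C_mul, coeff_mul_add_eq_of_natDegree_le hpm hQdeg, cpm, hQcoeff, one_mul]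
    rw [c1, c2]
  have hRdeg : R.natDegree ≤ m + 2 * n := by
    rw [hRdef]
    apply (natDegree_sub_le _ _).trans
    apply max_le (le_of_eq hM1deg)
    calc (2 * (1 + X) ^ m * Q : ℤ[X]).natDegree
        ≤ (2 * (1 + X) ^ m : ℤ[X]).natDegree + Q.natDegree := natDegree_mul_le
      _ ≤ m + 2 * n := by
          gcongr
          calc (2 * (1 + X) ^ m : ℤ[X]).natDegree = (C 2 * (1 + X) ^ m : ℤ[X]).natDegree := by
                rw [map_ofNat]
            _ ≤ ((1 + X : ℤ[X]) ^ m).natDegree := natDegree_C_mul_le _ _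
            _ ≤ m := by rw [h1X.natDegree_pow, h1Xdeg, mul_one]
  have ha0 : a 0 = 0 ∨ a 0 = 1 := by
    have := ha 0 (Nat.zero_le n)
    simp [Nat.choose] at this
    omega
  have hε2 : ε * ε = 1 := by rcases ha0 with h | h <;> simp [hεdef, h]
  refine ⟨C ε * R, ?_, ?_⟩
  · apply monic_of_natDegree_le_of_coeff_eq_one (m + 2 * n)
    · exact (natDegree_C_mul_le _ _).trans hRdeg
    · rw [coeff_C_mul, hRcoeff, ← hεdef, hε2]
  · -- root
    rw [eval₂_mul, ← aeval_def, ← aeval_def, aeval_C]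
    have hRroot : aeval b R = 0 := by
      have hKe : aeval (2 * r * (1 - r)) K
          = ∑ i ∈ Finset.range (n + 1),
              (a i : ℝ) * (2 * r * (1 - r)) ^ i * (1 - 2 * r * (1 - r)) ^ (n - i) := by
        rw [hKdef]
        simp only [map_sum, map_mul, map_pow, map_sub, map_one, aeval_C, aeval_X]
        simp only [algebraMap_int_eq, eq_intCast]
      have hQe : aeval b Q
          = ∑ i ∈ Finset.range (n + 1),
              (a i : ℝ) * 2 ^ i * b ^ i * (1 + b ^ 2) ^ (n - i) := by
        rw [hQdef]
        simp only [map_sum, map_mul, map_pow, map_add, map_one, aeval_C, aeval_X]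
        simp only [algebraMap_int_eq, eq_intCast]
        refine Finset.sum_congr rfl fun i _ => by push_cast; ring
      have hRe : aeval b R
          = b ^ m * (1 + b) ^ (2 * n) - 2 * (1 + b) ^ m * aeval b Q := by
        rw [hRdef]
        simp only [map_sub, map_mul, map_pow, map_add, map_one, map_ofNat, aeval_X]
      have key : r ^ (m + 2 * n) * aeval b R
          = (1 - r) ^ m - 2 * aeval (2 * r * (1 - r)) K := by
        rw [hRe, hQe, hKe, mul_sub]
        congr 1
        · calc r ^ (m + 2 * n) * (b ^ m * (1 + b) ^ (2 * n))
              = (r * b) ^ m * (r * (1 + b)) ^ (2 * n) := by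
                rw [pow_add, mul_pow, mul_pow]; ring
            _ = (1 - r) ^ m := by rw [e0, e1, one_pow, mul_one]
        · rw [Finset.mul_sum, Finset.mul_sum, Finset.mul_sum]
          refine Finset.sum_congr rfl fun i hi => ?_
          have hin : i ≤ n := Nat.lt_succ_iff.mp (Finset.mem_range.mp hi)
          obtain ⟨j, hj⟩ : ∃ j, n = i + j := ⟨n - i, by omega⟩
          subst hj
          have hni : (i + j) - i = j := by omega
          rw [hni]
          calc r ^ (m + 2 * (i + j)) * (2 * (1 + b) ^ m * ((a i : ℝ) * 2 ^ i * b ^ i * (1 + b ^ 2) ^ j))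
              = 2 * (a i : ℝ) * (r * (1 + b)) ^ m * ((2 * (r ^ 2 * b)) ^ i * (r ^ 2 * (1 + b ^ 2)) ^ j) := by
                rw [pow_add, pow_mul, pow_add, mul_pow, mul_pow, mul_pow, mul_pow]; ring
            _ = 2 * ((a i : ℝ) * (2 * r * (1 - r)) ^ i * (1 - 2 * r * (1 - r)) ^ j) := by
                rw [e1, e2, one_pow]
                have : 2 * (r ^ 2 * b) = 2 * r * (1 - r) := by
                  rw [show r ^ 2 * b = r * (r * b) by ring, e0]; ring
                rw [this]; ring
      have hrp : r ^ (m + 2 * n) ≠ 0 := pow_ne_zero _ hrne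
      have : r ^ (m + 2 * n) * aeval b R = 0 := by rw [key, ← heq]; ring
      exact (mul_eq_zero.mp this).resolve_left hrp
    rw [hRroot, mul_zero]
end

section
/- Let F be a polynomial with integer coefficients such that F(0) = 0, the coefficient of X in F is nonzero, and there is a prime p ≠ 2 dividing every coefficient of F while p² divides none of the nonzero coefficients of F. If r ∈ (0,1) satisfies r = F(2r(1−r)), then 1/r is not integral over ℤ (i.e., 1/r is not an algebraic integer). -/
open Polynomial

open Finset in

noncomputable def myP (F : Polynomial ℤ) (n : ℕ) : Polynomial ℤ :=
  X^(2*n-1) - ∑ i ∈ Finset.range (n+1), C (F.coeff i * 2^i) * X^(2*(n-i)) * (X-1)^i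

lemma myP_coeff_zero (F : Polynomial ℤ) (n : ℕ) (hn : 1 ≤ n) :
    (myP F n).coeff 0 = -(F.coeff n * 2^n * (-1)^n) := by
  rw [coeff_zero_eq_eval_zero]
  unfold myP
  rw [eval_sub, eval_pow, eval_X, eval_finset_sum]
  rw [zero_pow (by omega : 2*n-1 ≠ 0)]
  rw [Finset.sum_eq_single n]
  · simp
  · intro i hi hne
    have hlt : i < n := by simp at hi; omega
    simp [zero_pow (by omega : 2*(n-i) ≠ 0)]
  · intro h; simp at h

lemma myP_coeff_top (F : Polynomial ℤ) (n : ℕ) (hn : 1 ≤ n) (h0 : F.coeff 0 = 0) :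
    (myP F n).coeff (2*n-1) = 1 - 2 * F.coeff 1 := by
  unfold myP
  rw [coeff_sub, coeff_X_pow, if_pos rfl, finset_sum_coeff]
  rw [Finset.sum_eq_single 1]
  · have : C (F.coeff 1 * 2^1) * X ^ (2*(n-1)) * (X-1)^1 =
        C (F.coeff 1 * 2) * (X ^ (2*(n-1)) * (X-1)) := by ring
    rw [this, coeff_C_mul]
    have h21 : 2*n-1 = 1 + 2*(n-1) := by omega
    rw [h21, coeff_X_pow_mul]
    simp [coeff_sub, coeff_one]
    ring
  · intro i hi hne
    simp only [Finset.mem_range] at hi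
    rcases Nat.eq_zero_or_pos i with h|h
    · subst h; simp [h0]
    · -- i ≥ 2
      have hi2 : 2 ≤ i := by omega
      apply coeff_eq_zero_of_natDegree_lt
      calc (C (F.coeff i * 2 ^ i) * X ^ (2*(n-i)) * (X-1)^i).natDegree
          ≤ (C (F.coeff i * 2 ^ i) * X ^ (2*(n-i))).natDegree + ((X-1 : Polynomial ℤ)^i).natDegree :=
            natDegree_mul_le
        _ ≤ ((C (F.coeff i * 2 ^ i)).natDegree + (X ^ (2*(n-i)) : Polynomial ℤ).natDegree) + i * ((X-1:Polynomial ℤ)).natDegree :=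
            add_le_add natDegree_mul_le (natDegree_pow_le)
        _ ≤ (0 + 2*(n-i)) + i * 1 := by
            apply add_le_add
            · rw [natDegree_C, natDegree_X_pow]
            · exact Nat.mul_le_mul_left i (by
                have : (X - 1 : Polynomial ℤ) = X - C 1 := by simp
                rw [this, natDegree_X_sub_C])
        _ < 2*n-1 := by omega
  · intro h; simp at h; omega

lemma myP_natDegree_le (F : Polynomial ℤ) (n : ℕ) (hn : 1 ≤ n) (h0 : F.coeff 0 = 0) :
    (myP F n).natDegree ≤ 2*n-1 := by
  unfold myP
  apply le_trans (natDegree_sub_le _ _)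
  apply max_le
  · simp
  · apply Polynomial.natDegree_sum_le_of_forall_le
    intro i hi
    simp only [Finset.mem_range] at hi
    rcases Nat.eq_zero_or_pos i with h|h
    · subst h; simp [h0]
    · calc (C (F.coeff i * 2 ^ i) * X ^ (2*(n-i)) * (X-1)^i).natDegree
          ≤ (C (F.coeff i * 2 ^ i) * X ^ (2*(n-i))).natDegree + ((X-1 : Polynomial ℤ)^i).natDegree :=
            natDegree_mul_le
        _ ≤ ((C (F.coeff i * 2 ^ i)).natDegree + (X ^ (2*(n-i)) : Polynomial ℤ).natDegree) + i * ((X-1:Polynomial ℤ)).natDegree :=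
            add_le_add natDegree_mul_le (natDegree_pow_le)
        _ ≤ (0 + 2*(n-i)) + i * 1 := by
            apply add_le_add
            · rw [natDegree_C, natDegree_X_pow]
            · exact Nat.mul_le_mul_left i (by
                have : (X - 1 : Polynomial ℤ) = X - C 1 := by simp
                rw [this, natDegree_X_sub_C])
        _ ≤ 2*n-1 := by omega

lemma myP_eval_one (F : Polynomial ℤ) (n : ℕ) (h0 : F.coeff 0 = 0) :
    (myP F n).eval 1 = 1 := by
  unfold myP
  rw [eval_sub, eval_pow, eval_X, one_pow, eval_finset_sum]
  rw [Finset.sum_eq_zero]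
  · ring
  · intro i hi
    rcases Nat.eq_zero_or_pos i with h|h
    · subst h; simp [h0]
    · simp [zero_pow (by omega : i ≠ 0)]

lemma myP_map (F : Polynomial ℤ) (n : ℕ) (p : ℕ)
    (hdvd : ∀ i, (p : ℤ) ∣ F.coeff i) :
    (myP F n).map (Int.castRingHom (ZMod p)) = X^(2*n-1) := by
  unfold myP
  rw [Polynomial.map_sub, Polynomial.map_pow, map_X, Polynomial.map_sum]
  rw [Finset.sum_eq_zero, sub_zero]
  intro i hi
  rw [Polynomial.map_mul, Polynomial.map_mul, map_C]
  have : ((F.coeff i * 2 ^ i : ℤ) : ZMod p) = 0 := by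
    obtain ⟨c, hc⟩ := hdvd i
    rw [hc]
    push_cast
    simp [ZMod.natCast_self]
  simp [Int.coe_castRingHom, this]

lemma myP_aeval (F : Polynomial ℤ) (hn1 : 1 ≤ F.natDegree) (r : ℝ) (hrne : r ≠ 0)
    (heq : r = aeval (2 * r * (1 - r)) F) :
    aeval (1/r) (myP F F.natDegree) = 0 := by
  set n := F.natDegree with hn
  set α : ℝ := 1/r with hα
  have hrα : r * α = 1 := by rw [hα]; field_simp
  have hexp : aeval α (myP F n) = α^(2*n-1) - ∑ i ∈ Finset.range (n+1),
      (F.coeff i : ℝ) * 2^i * α^(2*(n-i)) * (α-1)^i := by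
    unfold myP
    rw [map_sub, map_pow, aeval_X, map_sum]
    congr 1
    apply Finset.sum_congr rfl
    intro i _
    rw [map_mul, map_mul, aeval_C, map_pow, aeval_X, map_pow, map_sub, aeval_X, map_one]
    push_cast
    norm_num
  have hsum : r = ∑ i ∈ Finset.range (n+1), (F.coeff i : ℝ) * (2*r*(1-r))^i := by
    conv_lhs => rw [heq]
    rw [Polynomial.aeval_eq_sum_range]
    apply Finset.sum_congr rfl
    intro i _
    rw [zsmul_eq_mul]
  have hkey : ∀ i ∈ Finset.range (n+1),
      (F.coeff i : ℝ) * 2^i * α^(2*(n-i)) * (α-1)^i * r^(2*n)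
        = (F.coeff i : ℝ) * (2*r*(1-r))^i := by
    intro i hi
    simp only [Finset.mem_range] at hi
    have hin : i ≤ n := by omega
    have hr2 : r^(2*n) = r^(2*(n-i)) * (r^i * r^i) := by
      rw [← pow_add, ← pow_add]; congr 1; omega
    have h1r : r * (α - 1) = 1 - r := by
      rw [mul_sub, hrα, mul_one]
    calc (F.coeff i : ℝ) * 2^i * α^(2*(n-i)) * (α-1)^i * r^(2*n)
        = (F.coeff i : ℝ) * 2^i * ((r*α)^(2*(n-i)) * (r*(α-1))^i * r^i) := by
          rw [hr2, mul_pow, mul_pow]; ring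
      _ = (F.coeff i : ℝ) * 2^i * ((1-r)^i * r^i) := by rw [hrα, h1r, one_pow, one_mul]
      _ = (F.coeff i : ℝ) * (2*r*(1-r))^i := by rw [mul_pow, mul_pow]; ring
  have hmain : aeval α (myP F n) * r^(2*n) = 0 := by
    rw [hexp, sub_mul, Finset.sum_mul]
    rw [Finset.sum_congr rfl hkey, ← hsum]
    have : α^(2*n-1) * r^(2*n) = r := by
      have h2n : r^(2*n) = r^(2*n-1) * r := by
        rw [← pow_succ]; congr 1; omega
      rw [h2n, ← mul_assoc, ← mul_pow, mul_comm α r, hrα, one_pow, one_mul]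
    rw [this, sub_self]
  have hrpow : r^(2*n) ≠ 0 := pow_ne_zero _ hrne
  exact (mul_eq_zero.mp hmain).resolve_right hrpow


lemma X_dvd_of_dvd_X_pow {K : Type*} [Field K] {f : Polynomial K} {k : ℕ}
    (hdvd : f ∣ X^k) (hu : ¬ IsUnit f) : (X : Polynomial K) ∣ f := by
  have hf0 : f ≠ 0 := by
    rintro rfl
    exact pow_ne_zero k Polynomial.X_ne_zero (eq_zero_of_zero_dvd hdvd)
  obtain ⟨g, hgirr, hgf⟩ := WfDvdMonoid.exists_irreducible_factor hu hf0
  have hgX : g ∣ X := hgirr.prime.dvd_of_dvd_pow (hgf.trans hdvd)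
  have hassoc := hgirr.associated_of_dvd Polynomial.irreducible_X hgX
  exact hassoc.symm.dvd.trans hgf


/-- let `F ∈ ℤ[X]` have zero constant term, nonzero linear term,
and a prime `p ≠ 2` dividing every coefficient of `F` while `p²` divides none of
the nonzero coefficients.  If `r ∈ (0,1)` satisfies `r = F(2r(1-r))`, then `1/r`
is not an algebraic integer. -/
theorem one_div_r_not_algebraic_integer (F : Polynomial ℤ)
    (h0 : F.coeff 0 = 0) (h1 : F.coeff 1 ≠ 0)
    (p : ℕ) (hp : p.Prime) (hp2 : p ≠ 2)
    (hdvd : ∀ i, (p : ℤ) ∣ F.coeff i)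
    (hndvd : ∀ i, F.coeff i ≠ 0 → ¬ ((p : ℤ) ^ 2 ∣ F.coeff i))
    (r : ℝ) (hr : r ∈ Set.Ioo (0 : ℝ) 1)
    (heq : r = aeval (2 * r * (1 - r)) F) :
    ¬ IsIntegral ℤ (1 / r) := by
  intro hint
  obtain ⟨hr0, hr1⟩ := hr
  have hrne : r ≠ 0 := ne_of_gt hr0
  haveI : Fact p.Prime := ⟨hp⟩
  set n := F.natDegree with hnd
  have hn1 : 1 ≤ n := le_natDegree_of_ne_zero h1
  have hF0 : F ≠ 0 := fun h => h1 (by simp [h])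
  have han : F.coeff n ≠ 0 := by
    rw [hnd, ← Polynomial.leadingCoeff]
    exact Polynomial.leadingCoeff_ne_zero.mpr hF0
  set P := myP F n with hP
  have hPα : aeval (1/r) P = 0 := myP_aeval F hn1 r hrne heq
  have hMdvd : minpoly ℤ (1/r) ∣ P := minpoly.isIntegrallyClosed_dvd hint hPα
  obtain ⟨Q, hPQ⟩ := hMdvd
  set M := minpoly ℤ (1/r) with hM
  have hMmonic : M.Monic := minpoly.monic hint
  have hMdegpos : 0 < M.natDegree := minpoly.natDegree_pos hint
  set φ := Int.castRingHom (ZMod p) with hφ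
  have hmapP : P.map φ = X^(2*n-1) := myP_map F n p hdvd
  have hXnz : (X : Polynomial (ZMod p))^(2*n-1) ≠ 0 := pow_ne_zero _ Polynomial.X_ne_zero
  have hfac : M.map φ * Q.map φ = X^(2*n-1) := by
    rw [← Polynomial.map_mul, ← hPQ, hmapP]
  have hMmapmonic : (M.map φ).Monic := hMmonic.map φ
  have hMmapdeg : (M.map φ).natDegree = M.natDegree := hMmonic.natDegree_map φ
  have hMnotunit : ¬ IsUnit (M.map φ) := by
    intro h
    have := Polynomial.natDegree_eq_zero_of_isUnit h
    omega
  have hXM : X ∣ M.map φ := X_dvd_of_dvd_X_pow ⟨Q.map φ, hfac.symm⟩ hMnotunit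
  have hpM0 : (p:ℤ) ∣ M.coeff 0 := by
    rw [Polynomial.X_dvd_iff, Polynomial.coeff_map] at hXM
    exact (ZMod.intCast_zmod_eq_zero_iff_dvd _ p).mp hXM
  have hPne : P ≠ 0 := by
    intro h
    rw [h, Polynomial.map_zero] at hmapP
    exact hXnz hmapP.symm
  have hQne : Q ≠ 0 := by
    rintro rfl
    rw [mul_zero] at hPQ
    exact hPne hPQ
  by_cases hQu : IsUnit (Q.map φ)
  · -- case A : Q is (mapped to) a unit
    have hQdeg0 : (Q.map φ).natDegree = 0 := Polynomial.natDegree_eq_zero_of_isUnit hQu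
    have hQmapne : Q.map φ ≠ 0 := hQu.ne_zero
    have hdeg1 : (M.map φ).natDegree + (Q.map φ).natDegree = 2*n-1 := by
      rw [← Polynomial.natDegree_mul hMmapmonic.ne_zero hQmapne, hfac, natDegree_X_pow]
    have hdegs : P.natDegree = M.natDegree + Q.natDegree := by
      rw [hPQ]; exact Polynomial.natDegree_mul hMmonic.ne_zero hQne
    have hPle : P.natDegree ≤ 2*n-1 := myP_natDegree_le F n hn1 h0
    have hQdeg : Q.natDegree = 0 := by omega
    have hQC : Q = C (Q.coeff 0) := Polynomial.eq_C_of_natDegree_eq_zero hQdeg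
    set q := Q.coeff 0 with hq
    have heval1 : (1:ℤ) = M.eval 1 * q := by
      have h1' := myP_eval_one F n h0
      rw [← hP, hPQ, hQC, eval_mul, eval_C] at h1'
      exact h1'.symm
    have hqunit : IsUnit q := IsUnit.of_mul_eq_one (M.eval 1) (by rw [mul_comm]; exact heval1.symm)
    have hMdegtop : M.natDegree = 2*n-1 := by omega
    have hcoefftop : P.coeff (2*n-1) = q := by
      rw [hPQ, hQC, Polynomial.coeff_mul_C]
      have hMc : M.coeff (2*n-1) = 1 := by
        rw [← hMdegtop]; exact hMmonic.coeff_natDegree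
      rw [hMc, one_mul]
    have htop := myP_coeff_top F n hn1 h0
    rw [← hP] at htop
    rw [htop] at hcoefftop
    rcases Int.isUnit_iff.mp hqunit with h|h
    · rw [h] at hcoefftop
      omega
    · rw [h] at hcoefftop
      have ha1 : F.coeff 1 = 1 := by omega
      have := hdvd 1
      rw [ha1] at this
      have hle := Int.le_of_dvd one_pos this
      have := hp.two_le
      omega
  · -- case B : both nonunits, Eisenstein contradiction
    have hQmapne : Q.map φ ≠ 0 := by
      intro h
      rw [h, mul_zero] at hfac
      exact hXnz hfac.symm
    have hXQ : X ∣ Q.map φ :=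
      X_dvd_of_dvd_X_pow ⟨M.map φ, by rw [← hfac]; ring⟩ hQu
    have hpQ0 : (p:ℤ) ∣ Q.coeff 0 := by
      rw [Polynomial.X_dvd_iff, Polynomial.coeff_map] at hXQ
      exact (ZMod.intCast_zmod_eq_zero_iff_dvd _ p).mp hXQ
    have hP0 : (p:ℤ)^2 ∣ P.coeff 0 := by
      rw [hPQ, Polynomial.mul_coeff_zero, sq]
      exact mul_dvd_mul hpM0 hpQ0
    rw [hP, myP_coeff_zero F n hn1, dvd_neg] at hP0
    have hP0' : (p:ℤ)^2 ∣ F.coeff n * 2^n := by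
      have h2 : F.coeff n * 2^n * (-1)^n * (-1)^n = F.coeff n * 2^n := by
        rw [mul_assoc, ← mul_pow]
        norm_num
      have := hP0.mul_right ((-1:ℤ)^n)
      rwa [h2] at this
    have hcop : IsCoprime ((p:ℤ)^2) ((2:ℤ)^n) := by
      apply IsCoprime.pow
      rw [Int.isCoprime_iff_gcd_eq_one]
      simpa [Int.gcd] using (Nat.coprime_primes hp Nat.prime_two).mpr hp2
    exact hndvd n han (hcop.dvd_of_dvd_mul_right hP0')
end
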